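/- Let d ≥ 2 be an integer and γ ∈ [2(d-1)/(2d-1), 1]. Define β := (1/(d+1))·((d-1)/γ + 1)·[(1/d)·((d-1)/γ + 1)² − d]. Then β < 1. -/

import Mathlib

/-- For `d ≥ 2` and `γ ∈ [2(d-1)/(2d-1), 1]`, the exponent
`β = (1/(d+1))·((d-1)/γ + 1)·[(1/d)·((d-1)/γ + 1)² − d]` is less than 1. -/
theorem beta_lt_one (d : ℕ) (hd : 2 ≤ d) (γ : ℝ)
    (hγ1 : 2 * ((d : ℝ) - 1) / (2 * (d : ℝ) - 1) ≤ γ) (hγ2 : γ ≤ 1) :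
    (1 / ((d : ℝ) + 1)) * (((d : ℝ) - 1) / γ + 1) *
        ((1 / (d : ℝ)) * (((d : ℝ) - 1) / γ + 1) ^ 2 - d) < 1 := by
  have hd' : (2 : ℝ) ≤ (d : ℝ) := by exact_mod_cast hd
  have h2d : (0 : ℝ) < 2 * (d : ℝ) - 1 := by linarith
  have hγpos : 0 < γ :=
    lt_of_lt_of_le (div_pos (by linarith) h2d) hγ1
  set t : ℝ := ((d : ℝ) - 1) / γ with ht
  have htu : t ≤ (2 * (d : ℝ) - 1) / 2 := by
    rw [ht, div_le_div_iff₀ hγpos (by norm_num)]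
    have := (div_le_iff₀ h2d).mp hγ1
    nlinarith
  have htl : (d : ℝ) - 1 ≤ t := by
    rw [ht, le_div_iff₀ hγpos]
    nlinarith
  have hdpos : (0 : ℝ) < d := by linarith
  have hkey : (1 / ((d : ℝ) + 1)) * (t + 1) * ((1 / (d : ℝ)) * (t + 1) ^ 2 - d)
      = ((t + 1) * ((t + 1) ^ 2 - (d : ℝ) ^ 2)) / ((d : ℝ) * ((d : ℝ) + 1)) := by
    field_simp
  rw [hkey, div_lt_one (by positivity)]
  nlinarith [sq_nonneg (t + 1), sq_nonneg (t - d)]
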